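/- arXiv:2003.01037 — 5 statements merged into one kernel-verified Lean document; each statement's English description precedes it below -/
import Mathlib

section
/- Let ψ : ℝ → ℂ be integrable and let 𝓕ψ(ξ) = ∫ ψ(s)·exp(−2πi ξ s) ds denote its Fourier integral. Let f, φ be real numbers and define y(t) = cos(2πft + φ). If 𝓕ψ(−f) = 0, then for every real t the convolution integral ∫ y(s)·ψ(t−s) ds converges and equals (1/2)·𝓕ψ(f)·exp(i(2πft + φ)). -/
open Complex MeasureTheory Real

/-- Let `ψ : ℝ → ℂ` be integrable with Fourier integral
`𝓕ψ(ξ) = ∫ ψ(s)·exp(−2πi ξ s) ds`, let `y(t) = cos(2πft + φ)`, and assume `𝓕ψ(−f) = 0`.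
Then for every real `t` the convolution integral `∫ y(s)·ψ(t−s) ds` converges and equals
`(1/2)·𝓕ψ(f)·exp(i(2πft + φ))`. -/
theorem conv_cos_with_analytic_filter
    (ψ : ℝ → ℂ) (hψ : Integrable ψ)
    (F : ℝ → ℂ)
    (hF : ∀ ξ : ℝ, F ξ = ∫ s : ℝ, ψ s * Complex.exp (-(((2 * π * ξ * s : ℝ)) : ℂ) * Complex.I))
    (f φ : ℝ) (y : ℝ → ℝ) (hy : ∀ t : ℝ, y t = Real.cos (2 * π * f * t + φ))
    (hanalytic : F (-f) = 0) (t : ℝ) :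
    Integrable (fun s : ℝ => (y s : ℂ) * ψ (t - s)) ∧
    (∫ s : ℝ, (y s : ℂ) * ψ (t - s))
      = (1 / 2 : ℂ) * F f * Complex.exp (((2 * π * f * t + φ : ℝ) : ℂ) * Complex.I) := by
  have hycont : Continuous y := by
    have : y = fun t => Real.cos (2 * π * f * t + φ) := funext hy
    rw [this]; continuity
  -- integrability of the convolution integrand
  have hψt : Integrable (fun s : ℝ => ψ (t - s)) := hψ.comp_sub_left t
  have hInt : Integrable (fun s : ℝ => (y s : ℂ) * ψ (t - s)) := by
    apply hψt.bdd_mul (c := 1) (Complex.continuous_ofReal.comp hycont).aestronglyMeasurable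
    refine Filter.Eventually.of_forall (fun s => ?_)
    simp only [Function.comp_apply, Complex.norm_real, Real.norm_eq_abs, hy]
    exact Real.abs_cos_le_one _
  refine ⟨hInt, ?_⟩
  set θ : ℝ := 2 * π * f * t + φ with hθ
  -- the two modulated integrands
  set g₁ : ℝ → ℂ := fun u => ψ u * Complex.exp (-(((2 * π * f * u : ℝ)) : ℂ) * Complex.I)
  set g₂ : ℝ → ℂ := fun u => ψ u * Complex.exp (-(((2 * π * (-f) * u : ℝ)) : ℂ) * Complex.I)
  have hg : ∀ (ξ : ℝ), Integrable (fun u : ℝ => ψ u *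
      Complex.exp (-(((2 * π * ξ * u : ℝ)) : ℂ) * Complex.I)) := by
    intro ξ
    have hm : AEStronglyMeasurable
        (fun u : ℝ => Complex.exp (-(((2 * π * ξ * u : ℝ)) : ℂ) * Complex.I)) volume := by
      apply Continuous.aestronglyMeasurable; continuity
    have hb : ∀ u : ℝ, ‖Complex.exp (-(((2 * π * ξ * u : ℝ)) : ℂ) * Complex.I)‖ ≤ 1 := by
      intro u
      rw [Complex.norm_exp]
      simp
    simpa [mul_comm] using hψ.bdd_mul hm (Filter.Eventually.of_forall hb)
  have hg₁ : Integrable g₁ := hg f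
  have hg₂ : Integrable g₂ := hg (-f)
  -- pointwise identity
  have key : ∀ u : ℝ, (y (t - u) : ℂ) * ψ u =
      (1 / 2 : ℂ) * Complex.exp ((θ : ℂ) * Complex.I) * g₁ u
      + (1 / 2 : ℂ) * Complex.exp (-(θ : ℂ) * Complex.I) * g₂ u := by
    intro u
    rw [hy, Complex.ofReal_cos]
    have h2 : Complex.cos ((2 * π * f * (t - u) + φ : ℝ) : ℂ) =
        (Complex.exp (((2 * π * f * (t - u) + φ : ℝ) : ℂ) * Complex.I)
          + Complex.exp (-((2 * π * f * (t - u) + φ : ℝ) : ℂ) * Complex.I)) / 2 := by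
      have h := Complex.two_cos (x := ((2 * π * f * (t - u) + φ : ℝ) : ℂ))
      linear_combination h / 2
    rw [h2]
    have e1 : (((2 * π * f * (t - u) + φ : ℝ) : ℂ)) * Complex.I
        = (θ : ℂ) * Complex.I + (-(((2 * π * f * u : ℝ)) : ℂ)) * Complex.I := by
      push_cast [hθ]; ring
    have e2 : (-((2 * π * f * (t - u) + φ : ℝ) : ℂ)) * Complex.I
        = (-(θ : ℂ)) * Complex.I + (-(((2 * π * (-f) * u : ℝ)) : ℂ)) * Complex.I := by
      push_cast [hθ]; ring
    rw [e1, e2, Complex.exp_add, Complex.exp_add]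
    simp only [g₁, g₂]
    ring
  calc (∫ s : ℝ, (y s : ℂ) * ψ (t - s))
      = ∫ u : ℝ, (y (t - u) : ℂ) * ψ u := by
        rw [← integral_sub_left_eq_self (fun u : ℝ => (y (t - u) : ℂ) * ψ u) volume t]
        congr 1; ext s; simp
    _ = ∫ u : ℝ, ((1 / 2 : ℂ) * Complex.exp ((θ : ℂ) * Complex.I) * g₁ u
          + (1 / 2 : ℂ) * Complex.exp (-(θ : ℂ) * Complex.I) * g₂ u) := by
        exact integral_congr_ae (Filter.Eventually.of_forall key)
    _ = (1 / 2 : ℂ) * Complex.exp ((θ : ℂ) * Complex.I) * (∫ u, g₁ u)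
          + (1 / 2 : ℂ) * Complex.exp (-(θ : ℂ) * Complex.I) * (∫ u, g₂ u) := by
        rw [integral_add (hg₁.const_mul _) (hg₂.const_mul _), integral_const_mul,
          integral_const_mul]
    _ = (1 / 2 : ℂ) * F f * Complex.exp (((2 * π * f * t + φ : ℝ) : ℂ) * Complex.I) := by
        rw [← hF f, ← hF (-f)]
        rw [hanalytic]
        ring
end

section
/- Let ψ : ℝ → ℂ be integrable with Fourier integral 𝓕ψ(ξ) = ∫ ψ(s)·exp(−2πi ξ s) ds, and let f₁, f₂ > 0 satisfy 𝓕ψ(−f₁) = 𝓕ψ(−f₂) = 0. Let a₁, a₂, φ₁, φ₂ be real and set y(t) = a₁cos(2πf₁t + φ₁) + a₂cos(2πf₂t + φ₂). Then for every real t, |(y ⋆ ψ)(t)|² = (1/4)|𝓕ψ(f₁)|²·a₁² + (1/4)|𝓕ψ(f₂)|²·a₂² + (1/2)·a₁a₂·Re( 𝓕ψ(f₁)·conj(𝓕ψ(f₂))·exp(i(2π(f₁−f₂)t + (φ₁−φ₂))) ), where (y ⋆ ψ)(t) = ∫ y(s)·ψ(t−s) ds. In particular, the time-varying part of the squared scalogram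 is a difference tone of frequency |f₂ − f₁|, with amplitude proportional to the product a₁a₂. -/
open Complex MeasureTheory Real

lemma myint (ψ : ℝ → ℂ) (hψ : Integrable ψ) (f φ t : ℝ) :
    Integrable (fun s : ℝ => Complex.exp (((2*π*f*s + φ : ℝ) : ℂ) * Complex.I) * ψ (t - s)) := by
  have h1 : Integrable (fun s : ℝ => ψ (t - s)) := hψ.comp_sub_left t
  refine h1.bdd_mul (c := 1) ?_ (Filter.Eventually.of_forall fun s => ?_)
  · exact (Complex.continuous_exp.comp (by continuity)).aestronglyMeasurable
  · rw [Complex.norm_exp]; simp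

lemma myconv (ψ : ℝ → ℂ) (hψ : Integrable ψ) (f φ t : ℝ) :
    (∫ s : ℝ, Complex.exp (((2*π*f*s + φ : ℝ) : ℂ) * Complex.I) * ψ (t - s))
      = Complex.exp (((2*π*f*t + φ : ℝ) : ℂ) * Complex.I)
        * ∫ s : ℝ, ψ s * Complex.exp (-(((2*π*f*s : ℝ)) : ℂ) * Complex.I) := by
  calc (∫ s : ℝ, Complex.exp (((2*π*f*s + φ : ℝ) : ℂ) * Complex.I) * ψ (t - s))
      = ∫ s : ℝ, Complex.exp (((2*π*f*(t-s) + φ : ℝ) : ℂ) * Complex.I) * ψ (t - (t - s)) :=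
        (integral_sub_left_eq_self
          (fun s : ℝ => Complex.exp (((2*π*f*s + φ : ℝ) : ℂ) * Complex.I) * ψ (t - s)) volume t).symm
    _ = ∫ s : ℝ, Complex.exp (((2*π*f*t + φ : ℝ) : ℂ) * Complex.I)
          * (ψ s * Complex.exp (-(((2*π*f*s : ℝ)) : ℂ) * Complex.I)) := by
        congr 1; funext s
        rw [show t - (t - s) = s from by ring, mul_comm (ψ s), ← mul_assoc, ← Complex.exp_add]
        congr 2
        push_cast
        ring
    _ = _ := integral_const_mul _ _

/-- Squared scalogram of a two-component signal: two constant square terms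
plus a cross term oscillating at the difference frequency `|f₂ − f₁|`, with amplitude
proportional to `a₁·a₂`. -/
theorem sq_scalogram_two_tones
    (ψ : ℝ → ℂ) (hψ : Integrable ψ)
    (F : ℝ → ℂ)
    (hF : ∀ ξ : ℝ, F ξ = ∫ s : ℝ, ψ s * Complex.exp (-(((2 * π * ξ * s : ℝ)) : ℂ) * Complex.I))
    (f₁ f₂ : ℝ) (hf₁ : 0 < f₁) (hf₂ : 0 < f₂)
    (hanalytic₁ : F (-f₁) = 0) (hanalytic₂ : F (-f₂) = 0)
    (a₁ a₂ φ₁ φ₂ : ℝ) (y : ℝ → ℝ)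
    (hy : ∀ t : ℝ, y t = a₁ * Real.cos (2 * π * f₁ * t + φ₁)
                        + a₂ * Real.cos (2 * π * f₂ * t + φ₂))
    (t : ℝ) :
    Complex.normSq (∫ s : ℝ, (y s : ℂ) * ψ (t - s))
      = (1 / 4) * Complex.normSq (F f₁) * a₁ ^ 2
        + (1 / 4) * Complex.normSq (F f₂) * a₂ ^ 2
        + (1 / 2) * a₁ * a₂ *
            (F f₁ * (starRingEnd ℂ) (F f₂) *
              Complex.exp (((2 * π * (f₁ - f₂) * t + (φ₁ - φ₂) : ℝ) : ℂ) * Complex.I)).re := by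
  set E₁ : ℂ := Complex.exp (((2 * π * f₁ * t + φ₁ : ℝ) : ℂ) * Complex.I) with hE₁def
  set E₂ : ℂ := Complex.exp (((2 * π * f₂ * t + φ₂ : ℝ) : ℂ) * Complex.I) with hE₂def
  have hpt : ∀ s : ℝ, ((y s : ℝ) : ℂ) * ψ (t - s)
      = ((a₁ : ℂ)/2) * (Complex.exp (((2 * π * f₁ * s + φ₁ : ℝ) : ℂ) * Complex.I) * ψ (t - s))
        + ((a₁ : ℂ)/2) * (Complex.exp (((2 * π * (-f₁) * s + (-φ₁) : ℝ) : ℂ) * Complex.I) * ψ (t - s))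
        + (((a₂ : ℂ)/2) * (Complex.exp (((2 * π * f₂ * s + φ₂ : ℝ) : ℂ) * Complex.I) * ψ (t - s))
        + ((a₂ : ℂ)/2) * (Complex.exp (((2 * π * (-f₂) * s + (-φ₂) : ℝ) : ℂ) * Complex.I) * ψ (t - s))) := by
    intro s
    rw [hy s]
    rw [Complex.ofReal_add, Complex.ofReal_mul, Complex.ofReal_mul,
        Complex.ofReal_cos, Complex.ofReal_cos]
    simp only [show ∀ z : ℂ, Complex.cos z = (Complex.exp (z * Complex.I)
        + Complex.exp (-z * Complex.I)) / 2 from fun z => rfl]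
    rw [show ((2 * π * (-f₁) * s + (-φ₁) : ℝ) : ℂ) = -((2 * π * f₁ * s + φ₁ : ℝ) : ℂ) from by
      push_cast; ring]
    rw [show ((2 * π * (-f₂) * s + (-φ₂) : ℝ) : ℂ) = -((2 * π * f₂ * s + φ₂ : ℝ) : ℂ) from by
      push_cast; ring]
    ring
  have i₁ := (myint ψ hψ f₁ φ₁ t).const_mul ((a₁ : ℂ)/2)
  have i₁' := (myint ψ hψ (-f₁) (-φ₁) t).const_mul ((a₁ : ℂ)/2)
  have i₂ := (myint ψ hψ f₂ φ₂ t).const_mul ((a₂ : ℂ)/2)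
  have i₂' := (myint ψ hψ (-f₂) (-φ₂) t).const_mul ((a₂ : ℂ)/2)
  have key : (∫ s : ℝ, (y s : ℂ) * ψ (t - s))
      = ((a₁ : ℂ)/2) * (E₁ * F f₁) + ((a₂ : ℂ)/2) * (E₂ * F f₂) := by
    rw [show (fun s : ℝ => ((y s : ℝ) : ℂ) * ψ (t - s)) = _ from funext hpt]
    have j₁ : Integrable (fun x : ℝ =>
        ((a₁ : ℂ)/2) * (Complex.exp (((2 * π * f₁ * x + φ₁ : ℝ) : ℂ) * Complex.I) * ψ (t - x))
        + ((a₁ : ℂ)/2) * (Complex.exp (((2 * π * (-f₁) * x + (-φ₁) : ℝ) : ℂ) * Complex.I) * ψ (t - x))) := i₁.add i₁'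
    have j₂ : Integrable (fun x : ℝ =>
        ((a₂ : ℂ)/2) * (Complex.exp (((2 * π * f₂ * x + φ₂ : ℝ) : ℂ) * Complex.I) * ψ (t - x))
        + ((a₂ : ℂ)/2) * (Complex.exp (((2 * π * (-f₂) * x + (-φ₂) : ℝ) : ℂ) * Complex.I) * ψ (t - x))) := i₂.add i₂'
    rw [integral_add j₁ j₂,
        integral_add i₁ i₁', integral_add i₂ i₂', integral_const_mul, integral_const_mul, integral_const_mul,
        integral_const_mul, myconv ψ hψ f₁ φ₁ t, myconv ψ hψ (-f₁) (-φ₁) t,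
        myconv ψ hψ f₂ φ₂ t, myconv ψ hψ (-f₂) (-φ₂) t, ← hF f₁, ← hF (-f₁), ← hF f₂,
        ← hF (-f₂), hanalytic₁, hanalytic₂]
    rw [← hE₁def, ← hE₂def]
    ring
  have hnE₁ : Complex.normSq E₁ = 1 := by
    rw [hE₁def, Complex.normSq_eq_norm_sq, Complex.norm_exp_ofReal_mul_I]; norm_num
  have hnE₂ : Complex.normSq E₂ = 1 := by
    rw [hE₂def, Complex.normSq_eq_norm_sq, Complex.norm_exp_ofReal_mul_I]; norm_num
  have hE : E₁ * (starRingEnd ℂ) E₂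
      = Complex.exp (((2 * π * (f₁ - f₂) * t + (φ₁ - φ₂) : ℝ) : ℂ) * Complex.I) := by
    rw [hE₁def, hE₂def, ← Complex.exp_conj, ← Complex.exp_add]
    congr 1
    rw [map_mul, Complex.conj_ofReal, Complex.conj_I]
    push_cast; ring
  have hcross : (((a₁ : ℂ)/2) * (E₁ * F f₁)) * (starRingEnd ℂ) (((a₂ : ℂ)/2) * (E₂ * F f₂))
      = ((a₁ * a₂ / 4 : ℝ) : ℂ) * (F f₁ * (starRingEnd ℂ) (F f₂) *
          Complex.exp (((2 * π * (f₁ - f₂) * t + (φ₁ - φ₂) : ℝ) : ℂ) * Complex.I)) := by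
    calc (((a₁ : ℂ)/2) * (E₁ * F f₁)) * (starRingEnd ℂ) (((a₂ : ℂ)/2) * (E₂ * F f₂))
        = ((a₁ * a₂ / 4 : ℝ) : ℂ) * (F f₁ * (starRingEnd ℂ) (F f₂) * (E₁ * (starRingEnd ℂ) E₂)) := by
          simp only [map_mul, map_div₀, Complex.conj_ofReal, map_ofNat]
          push_cast; ring
      _ = _ := by rw [hE]
  rw [key, Complex.normSq_add, hcross, Complex.normSq_mul, Complex.normSq_mul,
      Complex.normSq_mul, Complex.normSq_mul, Complex.normSq_div, Complex.normSq_div,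
      Complex.normSq_ofReal, Complex.normSq_ofReal, hnE₁, hnE₂, Complex.re_ofReal_mul]
  norm_num
  ring
end

section
/- Let f₁ > 0 and let y be a trigonometric polynomial of fundamental frequency f₁, y(t) = Σ_{n∈ℤ} c(n)·exp(i n f₁ t) with finitely many nonzero coefficients. For λ > 0 define the Shannon scalogram operator U_λ y (t) = |P_λ y(t)|², where P_λ keeps only the terms with λ < n f₁ ≤ 2λ; note that U_λ y is again a trigonometric polynomial of fundamental frequency f₁, so the operators can be composed. Suppose M ≥ 1 and the Fourier support of y is contained in {n ∈ ℤ : 1 ≤ n ≤ 2^M}, i.e., y has a finite bandwidth of M octaves above its fundamental f₁. Then for every integer m > M and all positive scales λ₁, …, λ_m, the iterated Shannon scalogram (U_{λ_m} ∘ ⋯ ∘ U_{λ_1}) y is identically zero. -/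
open Complex

/-- Evaluation of the trigonometric polynomial of fundamental frequency `f₁` with
coefficients `c : ℤ → ℂ` (finitely many nonzero): `t ↦ Σ_n c(n)·exp(i n f₁ t)`. -/
noncomputable def trigEval (f₁ : ℝ) (c : ℤ → ℂ) : ℝ → ℂ :=
  fun t => ∑ᶠ n : ℤ, c n * Complex.exp ((n : ℂ) * (f₁ : ℂ) * (t : ℂ) * Complex.I)

/-- Coefficients of the Shannon band projection `P_l`: keep only the terms whose
frequency `n·f₁` lies in the octave band `(l, 2l]`. -/
noncomputable def bandProjCoeff (f₁ l : ℝ) (c : ℤ → ℂ) : ℤ → ℂ :=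
  fun n => if l < (n : ℝ) * f₁ ∧ (n : ℝ) * f₁ ≤ 2 * l then c n else 0

/-- Coefficients of the Shannon scalogram `U_l y = |P_l y|²` of the trigonometric
polynomial with coefficients `c` : since
`|P_l y(t)|² = Σ_{n,k} p(n)·conj(p(k))·exp(i (n−k) f₁ t)` with `p = bandProjCoeff f₁ l c`,
the coefficient of the frequency `d·f₁` is `Σ_n p(n)·conj(p(n−d))`. -/
noncomputable def scalogramCoeff (f₁ l : ℝ) (c : ℤ → ℂ) : ℤ → ℂ :=
  fun d => ∑ᶠ n : ℤ,
    bandProjCoeff f₁ l c n * (starRingEnd ℂ) (bandProjCoeff f₁ l c (n - d))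

/-- Coefficients of the iterated Shannon scalogram `(U_{λ_m} ∘ ⋯ ∘ U_{λ_1}) y`, where
`lams = [λ₁, …, λ_m]` (the head is applied first). -/
noncomputable def scatteringIterCoeff (f₁ : ℝ) (lams : List ℝ) (c : ℤ → ℂ) : ℤ → ℂ :=
  lams.foldl (fun c l => scalogramCoeff f₁ l c) c

lemma band_ne_zero {f₁ l : ℝ} {c : ℤ → ℂ} {n : ℤ} (h : bandProjCoeff f₁ l c n ≠ 0) :
    c n ≠ 0 ∧ l < (n : ℝ) * f₁ ∧ (n : ℝ) * f₁ ≤ 2 * l := by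
  unfold bandProjCoeff at h
  by_cases hc : l < (n : ℝ) * f₁ ∧ (n : ℝ) * f₁ ≤ 2 * l
  · rw [if_pos hc] at h; exact ⟨h, hc.1, hc.2⟩
  · rw [if_neg hc] at h; exact absurd rfl h

lemma band_pos {f₁ l : ℝ} (hf₁ : 0 < f₁) (hl : 0 < l) {c : ℤ → ℂ} {n : ℤ}
    (h : bandProjCoeff f₁ l c n ≠ 0) : 1 ≤ n := by
  have h2 := (band_ne_zero h).2.1
  have hn : (0:ℝ) < (n:ℝ) := by nlinarith
  exact_mod_cast Int.cast_pos.mp hn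

lemma scal_ne {f₁ l : ℝ} {c : ℤ → ℂ} {d : ℤ} (h : scalogramCoeff f₁ l c d ≠ 0) :
    ∃ n, bandProjCoeff f₁ l c n ≠ 0 ∧ bandProjCoeff f₁ l c (n - d) ≠ 0 := by
  by_contra hc
  push_neg at hc
  apply h
  unfold scalogramCoeff
  apply finsum_eq_zero_of_forall_eq_zero
  intro n
  by_cases h1 : bandProjCoeff f₁ l c n = 0
  · simp [h1]
  · simp [hc n h1]

lemma scal_step {f₁ l : ℝ} (hf₁ : 0 < f₁) (hl : 0 < l) {c : ℤ → ℂ} {B : ℤ}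
    (hB : ∀ n, 1 ≤ n → c n ≠ 0 → n ≤ B) :
    ∀ d, scalogramCoeff f₁ l c d ≠ 0 → 2 * d + 1 ≤ B := by
  intro d hd
  obtain ⟨n, h1, h2⟩ := scal_ne hd
  have hn1 : 1 ≤ n := band_pos hf₁ hl h1
  have hnB : n ≤ B := hB n hn1 (band_ne_zero h1).1
  have hub : (n:ℝ) * f₁ ≤ 2 * l := (band_ne_zero h1).2.2
  have hlb : l < ((n - d : ℤ):ℝ) * f₁ := (band_ne_zero h2).2.1
  have hcast : ((n - d : ℤ):ℝ) = (n:ℝ) - (d:ℝ) := by push_cast; ring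
  rw [hcast] at hlb
  have hdn : (d:ℝ) < (n:ℝ) - (d:ℝ) := by nlinarith
  have : d < n - d := by exact_mod_cast (by push_cast; linarith : (d:ℝ) < ((n - d : ℤ):ℝ))
  omega

lemma iter_zero {f₁ : ℝ} (hf₁ : 0 < f₁) :
    ∀ (lams : List ℝ), lams ≠ [] → (∀ l ∈ lams, 0 < l) →
    ∀ (B : ℤ) (c : ℤ → ℂ), B ≤ 2 ^ lams.length - 2 →
    (∀ n, 1 ≤ n → c n ≠ 0 → n ≤ B) →
    scatteringIterCoeff f₁ lams c = fun _ => 0 := by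
  intro lams
  induction lams with
  | nil => intro h; exact absurd rfl h
  | cons l rest ih =>
    intro _ hpos B c hBle hB
    have hl : 0 < l := hpos l (by simp)
    by_cases hrest : rest = []
    · subst hrest
      have hB0 : B ≤ 0 := by simpa using hBle
      have hz : scalogramCoeff f₁ l c = fun _ => 0 := by
        funext d
        by_contra hd
        obtain ⟨n, h1, _⟩ := scal_ne hd
        have hn1 := band_pos hf₁ hl h1
        have := hB n hn1 (band_ne_zero h1).1
        omega
      simpa [scatteringIterCoeff] using hz
    · have hlen : (l :: rest).length = rest.length + 1 := rfl
      have hpow : (2:ℤ) ^ (rest.length + 1) = 2 * 2 ^ rest.length := by ring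
      have key : ∀ n, 1 ≤ n → scalogramCoeff f₁ l c n ≠ 0 → n ≤ 2 ^ rest.length - 2 := by
        intro d _ hd
        have h1 := scal_step hf₁ hl hB d hd
        rw [hlen, hpow] at hBle
        omega
      have : scatteringIterCoeff f₁ (l :: rest) c
          = scatteringIterCoeff f₁ rest (scalogramCoeff f₁ l c) := rfl
      rw [this]
      exact ih hrest (fun x hx => hpos x (by simp [hx])) _ _ le_rfl key

/-- Theorem 1 of the paper. If `y` is a trigonometric polynomial of
fundamental frequency `f₁ > 0` whose Fourier support is contained in
`{n : 1 ≤ n ≤ 2^M}` (bandwidth of `M ≥ 1` octaves), then for every `m > M` and all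
positive scales `λ₁, …, λ_m`, the iterated Shannon scalogram
`(U_{λ_m} ∘ ⋯ ∘ U_{λ_1}) y` is identically zero. -/
theorem scattering_depth_le_bandwidth
    (f₁ : ℝ) (hf₁ : 0 < f₁) (c : ℤ → ℂ) (y : ℝ → ℂ)
    (hy : ∀ t : ℝ, y t = trigEval f₁ c t)
    (M : ℕ) (hM : 1 ≤ M)
    (hsupp : ∀ n : ℤ, c n ≠ 0 → 1 ≤ n ∧ n ≤ 2 ^ M)
    (lams : List ℝ) (hlen : M < lams.length) (hpos : ∀ l ∈ lams, 0 < l) :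
    ∀ t : ℝ, trigEval f₁ (scatteringIterCoeff f₁ lams c) t = 0 := by
  intro t
  have hne : lams ≠ [] := by
    intro h; rw [h] at hlen; simp at hlen
  have h2M : (2:ℤ) ^ M ≤ 2 ^ lams.length - 2 := by
    have h1 : (2:ℤ) ^ (M + 1) ≤ 2 ^ lams.length := by
      apply pow_le_pow_right₀ (by norm_num) (by omega)
    have h2 : (2:ℤ) ^ (M + 1) = 2 * 2 ^ M := by ring
    have h3 : (2:ℤ) ≤ 2 ^ M := by
      calc (2:ℤ) = 2 ^ 1 := by norm_num
      _ ≤ 2 ^ M := pow_le_pow_right₀ (by norm_num) hM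
    omega
  have hz := iter_zero hf₁ lams hne hpos (2 ^ M) c h2M
    (fun n h1 hc => (hsupp n hc).2)
  rw [hz]
  simp [trigEval]
end

section
/- Let f₁ > 0, let N ≥ 1 be an integer, let a > 0 and φ ∈ ℝ, and define the complex tone y(t) = Σ_{n=1}^{N} a·exp(i(n f₁ t + φ)), a mixture of N components with equal amplitudes, equal phases, and evenly spaced frequencies. Let U_λ denote the Shannon scalogram operator U_λ y = |P_λ y|², where P_λ is the band projection keeping frequencies n f₁ with λ < n f₁ ≤ 2λ. Then for every integer m > max(1, ⌈log₂ N⌉) and all positive scales λ₁, …, λ_m, the iterated Shannon scalogram (U_{λ_m} ∘ ⋯ ∘ U_{λ_1}) y is identically zero. In particular, the effective scattering depth of such an N-component Fourier series grows at most logarithmically with N. -/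
open Complex

lemma aux_finsum_zero {g : ℤ → ℂ} (h : ∀ n, g n = 0) : ∑ᶠ n, g n = 0 := by
  have : g = fun _ => 0 := funext h
  rw [this]; exact finsum_zero

lemma aux_bandProj_ne {f₁ l : ℝ} (hf : 0 < f₁) (hl : 0 < l) {c : ℤ → ℂ} {n : ℤ}
    (h : bandProjCoeff f₁ l c n ≠ 0) :
    0 < n ∧ l < (n : ℝ) * f₁ ∧ (n : ℝ) * f₁ ≤ 2 * l ∧ c n ≠ 0 := by
  unfold bandProjCoeff at h
  by_cases hcond : l < (n : ℝ) * f₁ ∧ (n : ℝ) * f₁ ≤ 2 * l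
  · refine ⟨?_, hcond.1, hcond.2, by simpa [hcond] using h⟩
    have hn : (0 : ℝ) < (n : ℝ) * f₁ := lt_trans hl hcond.1
    have : (0 : ℝ) < (n : ℝ) := by nlinarith
    exact_mod_cast this
  · simp [hcond] at h

/-- If `c` has no positive-frequency support, its scalogram is identically zero. -/
lemma aux_scal_zero {f₁ l : ℝ} (hf : 0 < f₁) (hl : 0 < l) {c : ℤ → ℂ}
    (h : ∀ n : ℤ, 0 < n → c n = 0) : ∀ d, scalogramCoeff f₁ l c d = 0 := by
  have hp : ∀ n : ℤ, bandProjCoeff f₁ l c n = 0 := by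
    intro n
    by_contra hne
    obtain ⟨hn, _, _, hc⟩ := aux_bandProj_ne hf hl hne
    exact hc (h n hn)
  intro d
  apply aux_finsum_zero
  intro n
  simp [hp]

/-- Iterating on the zero coefficient function gives zero. -/
lemma aux_iter_zero (f₁ : ℝ) (hf : 0 < f₁) (lams : List ℝ) (hpos : ∀ l ∈ lams, 0 < l) :
    ∀ d, scatteringIterCoeff f₁ lams (fun _ => 0) d = 0 := by
  induction lams with
  | nil => intro d; simp [scatteringIterCoeff]
  | cons l rest ih =>
    intro d
    have hl : 0 < l := hpos l (by simp)
    have hz : scalogramCoeff f₁ l (fun _ => (0 : ℂ)) = fun _ => 0 :=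
      funext (aux_scal_zero hf hl (fun _ _ => rfl))
    have : scatteringIterCoeff f₁ (l :: rest) (fun _ => (0 : ℂ))
        = scatteringIterCoeff f₁ rest (fun _ => 0) := by
      unfold scatteringIterCoeff
      rw [List.foldl_cons, hz]
    rw [this]
    exact ih (fun l' hl' => hpos l' (by simp [hl'])) d

/-- If `c` has empty positive support and at least one scale is applied, result is zero. -/
lemma aux_posempty (f₁ : ℝ) (hf : 0 < f₁) (l : ℝ) (rest : List ℝ)
    (hpos : ∀ x ∈ l :: rest, 0 < x) {c : ℤ → ℂ} (h : ∀ n : ℤ, 0 < n → c n = 0) :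
    ∀ d, scatteringIterCoeff f₁ (l :: rest) c d = 0 := by
  have hl : 0 < l := hpos l (by simp)
  have hz : scalogramCoeff f₁ l c = fun _ => 0 := funext (aux_scal_zero hf hl h)
  have : scatteringIterCoeff f₁ (l :: rest) c = scatteringIterCoeff f₁ rest (fun _ => 0) := by
    unfold scatteringIterCoeff
    rw [List.foldl_cons, hz]
  rw [this]
  exact aux_iter_zero f₁ hf rest (fun x hx => hpos x (by simp [hx]))

/-- Support halving step. -/
lemma aux_step {f₁ l : ℝ} (hf : 0 < f₁) (hl : 0 < l) {c : ℤ → ℂ} {B : ℤ}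
    (hB : ∀ n : ℤ, 0 < n → c n ≠ 0 → n ≤ B) :
    ∀ d : ℤ, 0 < d → scalogramCoeff f₁ l c d ≠ 0 → 2 * d < B := by
  intro d hd hne
  have : ∃ n : ℤ, bandProjCoeff f₁ l c n * (starRingEnd ℂ) (bandProjCoeff f₁ l c (n - d)) ≠ 0 := by
    by_contra hall
    push_neg at hall
    exact hne (aux_finsum_zero hall)
  obtain ⟨n, hterm⟩ := this
  have hp1 : bandProjCoeff f₁ l c n ≠ 0 := fun h => hterm (by simp [h])
  have hp2 : bandProjCoeff f₁ l c (n - d) ≠ 0 := fun h => hterm (by simp [h])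
  obtain ⟨hn0, hn1, hn2, hcn⟩ := aux_bandProj_ne hf hl hp1
  obtain ⟨_, hm1, _, _⟩ := aux_bandProj_ne hf hl hp2
  have hnB : n ≤ B := hB n hn0 hcn
  -- from (n-d) f₁ > l and n f₁ ≤ 2 l : n f₁ < 2 (n-d) f₁, so n < 2(n-d), 2d < n ≤ B
  have hreal : 2 * (d : ℝ) < (n : ℝ) := by
    have h1 : (n : ℝ) * f₁ ≤ 2 * l := hn2
    have h2 : l < ((n : ℝ) - (d : ℝ)) * f₁ := by push_cast at hm1 ⊢; linarith [hm1]
    nlinarith [hf]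
  have h2d : 2 * d < n := by exact_mod_cast hreal
  omega

lemma aux_main (f₁ : ℝ) (hf : 0 < f₁) :
    ∀ (lams : List ℝ) (k : ℕ) (c : ℤ → ℂ),
      max 1 k < lams.length → (∀ l ∈ lams, 0 < l) →
      (∀ n : ℤ, 0 < n → c n ≠ 0 → n ≤ (2 ^ k : ℤ)) →
      ∀ d, scatteringIterCoeff f₁ lams c d = 0 := by
  intro lams
  induction lams with
  | nil => intro k c hlen _ _; simp at hlen
  | cons l rest ih =>
    intro k c hlen hpos hsupp
    have hl : 0 < l := hpos l (by simp)
    have hrestpos : ∀ x ∈ rest, 0 < x := fun x hx => hpos x (by simp [hx])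
    set c₁ := scalogramCoeff f₁ l c with hc₁
    have hstep : ∀ d : ℤ, 0 < d → c₁ d ≠ 0 → 2 * d < (2 ^ k : ℤ) :=
      aux_step hf hl hsupp
    have hfold : ∀ d, scatteringIterCoeff f₁ (l :: rest) c d
        = scatteringIterCoeff f₁ rest c₁ d := by
      intro d; unfold scatteringIterCoeff; rw [List.foldl_cons]
    rcases le_or_gt k 1 with hk | hk
    · -- positive support of c₁ is empty
      have hempty : ∀ n : ℤ, 0 < n → c₁ n = 0 := by
        intro n hn
        by_contra hne
        have := hstep n hn hne
        have h2 : (2 : ℤ) ^ k ≤ 2 := by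
          calc (2:ℤ)^k ≤ 2^1 := pow_le_pow_right₀ (by norm_num) hk
          _ = 2 := by norm_num
        omega
      -- rest is nonempty
      have hrl : 1 ≤ rest.length := by
        simp only [List.length_cons] at hlen
        omega
      obtain ⟨l', rest', hrest⟩ : ∃ l' rest', rest = l' :: rest' := by
        cases rest with
        | nil => simp at hrl
        | cons a b => exact ⟨a, b, rfl⟩
      intro d
      rw [hfold, hrest]
      exact aux_posempty f₁ hf l' rest' (hrest ▸ hrestpos) hempty d
    · -- k ≥ 2, recurse
      have hsupp' : ∀ n : ℤ, 0 < n → c₁ n ≠ 0 → n ≤ (2 ^ (k - 1) : ℤ) := by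
        intro n hn hne
        have h2 := hstep n hn hne
        have hpow : (2 : ℤ) ^ k = 2 * 2 ^ (k - 1) := by
          rw [← pow_succ']
          congr 1
          omega
        omega
      have hlen' : max 1 (k - 1) < rest.length := by
        simp only [List.length_cons] at hlen
        omega
      intro d
      rw [hfold]
      exact ih (k - 1) c₁ hlen' hrestpos hsupp' d

/-- For the complex tone `y(t) = Σ_{n=1}^{N} a·exp(i(n f₁ t + φ))`
(`N ≥ 1` components of equal amplitudes `a > 0`, equal phases `φ`, evenly spaced
frequencies), every iterated Shannon scalogram of order `m > max(1, ⌈log₂ N⌉)` is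
identically zero: the effective scattering depth grows at most logarithmically in `N`. -/
theorem scattering_depth_log_num_components
    (f₁ : ℝ) (hf₁ : 0 < f₁) (N : ℕ) (hN : 1 ≤ N) (a : ℝ) (ha : 0 < a) (φ : ℝ)
    (c : ℤ → ℂ)
    (hc : ∀ n : ℤ, c n = if 1 ≤ n ∧ n ≤ (N : ℤ)
                          then (a : ℂ) * Complex.exp ((φ : ℂ) * Complex.I) else 0)
    (y : ℝ → ℂ)
    (hy : ∀ t : ℝ, y t = ∑ n ∈ Finset.Icc (1 : ℤ) (N : ℤ),
            (a : ℂ) * Complex.exp (((n : ℂ) * (f₁ : ℂ) * (t : ℂ) + (φ : ℂ)) * Complex.I))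
    (hyc : ∀ t : ℝ, y t = trigEval f₁ c t)
    (lams : List ℝ) (hlen : max 1 (Nat.clog 2 N) < lams.length)
    (hpos : ∀ l ∈ lams, 0 < l) :
    ∀ t : ℝ, trigEval f₁ (scatteringIterCoeff f₁ lams c) t = 0 := by
  have hsupp : ∀ n : ℤ, 0 < n → c n ≠ 0 → n ≤ (2 ^ Nat.clog 2 N : ℤ) := by
    intro n hn hne
    rw [hc n] at hne
    by_cases hcond : 1 ≤ n ∧ n ≤ (N : ℤ)
    · have hNle : N ≤ 2 ^ Nat.clog 2 N := Nat.le_pow_clog one_lt_two N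
      have : (N : ℤ) ≤ (2 ^ Nat.clog 2 N : ℤ) := by exact_mod_cast hNle
      omega
    · simp [hcond] at hne
  have hzero := aux_main f₁ hf₁ lams (Nat.clog 2 N) c hlen hpos hsupp
  intro t
  unfold trigEval
  apply aux_finsum_zero
  intro n
  rw [hzero n]
  simp
end

section
/- Let f₁ > 0, let M ≥ 1 be a natural number, and let y(t) = Σ_{n∈ℤ} c(n)·exp(i n f₁ t) be a trigonometric polynomial whose Fourier support is contained in {n : 2^M < n ≤ 2^{M+1}} (the top octave band of a signal of bandwidth M+1 octaves). Then for every λ > 0, the function t ↦ |P_λ y(t)|², where P_λ is the Shannon band projection onto frequencies n f₁ with λ < n f₁ ≤ 2λ, is a trigonometric polynomial of fundamental frequency f₁ whose Fourier support is contained in {d ∈ ℤ : |d| ≤ 2^M − 1}; i.e., the scalogram of the high-pass detail of y has bandwidth of at most M octaves. -/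
open Complex

/-- induction step of the paper's Theorem 1. If the Fourier support of
`y(t) = Σ_n c(n)·exp(i n f₁ t)` is contained in the top octave band
`{n : 2^M < n ≤ 2^{M+1}}` with `M ≥ 1`, then for every scale `l > 0` the Shannon
scalogram `t ↦ |P_l y(t)|²` is a trigonometric polynomial of fundamental frequency `f₁`
whose Fourier support is contained in `{d : |d| ≤ 2^M − 1}`, i.e. it has a bandwidth of
at most `M` octaves. -/
theorem scalogram_of_top_octave_bandwidth
    (f₁ : ℝ) (hf₁ : 0 < f₁) (M : ℕ) (hM : 1 ≤ M) (c : ℤ → ℂ)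
    (hsupp : ∀ n : ℤ, c n ≠ 0 → (2 : ℤ) ^ M < n ∧ n ≤ 2 ^ (M + 1))
    (y : ℝ → ℂ) (hy : ∀ t : ℝ, y t = trigEval f₁ c t)
    (l : ℝ) (hl : 0 < l) :
    ∃ b : ℤ → ℂ,
      (∀ d : ℤ, b d ≠ 0 → |d| ≤ 2 ^ M - 1) ∧
      (∀ t : ℝ,
        trigEval f₁ (bandProjCoeff f₁ l c) t
            * (starRingEnd ℂ) (trigEval f₁ (bandProjCoeff f₁ l c) t)
          = trigEval f₁ b t) := by
  classical
  set a : ℤ → ℂ := bandProjCoeff f₁ l c with ha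
  have hA : ∀ n : ℤ, a n ≠ 0 → (2 : ℤ) ^ M < n ∧ n ≤ 2 ^ (M + 1) := by
    intro n hn
    apply hsupp
    intro hc
    apply hn
    simp [ha, bandProjCoeff, hc]
  have h2M : (2 : ℤ) ^ (M + 1) = 2 * 2 ^ M := by ring
  have hdiff : ∀ m n : ℤ, a m ≠ 0 → a n ≠ 0 → |m - n| ≤ 2 ^ M - 1 := by
    intro m n hm hn
    obtain ⟨h1, h2⟩ := hA m hm
    obtain ⟨h3, h4⟩ := hA n hn
    rw [abs_le]
    omega
  set S : Finset ℤ := Finset.Icc ((2 : ℤ) ^ M + 1) (2 ^ (M + 1)) with hS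
  set T : Finset ℤ := Finset.Icc (-((2 : ℤ) ^ M - 1)) ((2 : ℤ) ^ M - 1) with hT
  have haS : ∀ n : ℤ, a n ≠ 0 → n ∈ S := by
    intro n hn
    obtain ⟨h1, h2⟩ := hA n hn
    simp only [hS, Finset.mem_Icc]
    omega
  set b : ℤ → ℂ := fun d => ∑ m ∈ S, a m * (starRingEnd ℂ) (a (m - d)) with hb
  have hbT : ∀ d : ℤ, b d ≠ 0 → |d| ≤ 2 ^ M - 1 := by
    intro d hd
    obtain ⟨m, -, hm⟩ := Finset.exists_ne_zero_of_sum_ne_zero hd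
    have hm1 : a m ≠ 0 := fun h => hm (by simp [h])
    have hm2 : a (m - d) ≠ 0 := fun h => hm (by simp [h])
    have := hdiff m (m - d) hm1 hm2
    simpa using this
  refine ⟨b, hbT, ?_⟩
  intro t
  set E : ℤ → ℂ := fun n => Complex.exp ((n : ℂ) * (f₁ : ℂ) * (t : ℂ) * Complex.I) with hE
  have hconjE : ∀ n : ℤ, (starRingEnd ℂ) (E n) = Complex.exp (-((n : ℂ) * (f₁ : ℂ) * (t : ℂ) * Complex.I)) := by
    intro n
    rw [hE]
    simp only
    rw [← Complex.exp_conj]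
    congr 1
    simp [map_mul, Complex.conj_ofReal, Complex.conj_I]
  have hEmul : ∀ m n : ℤ, E m * (starRingEnd ℂ) (E n) = E (m - n) := by
    intro m n
    rw [hconjE, hE]
    simp only
    rw [← Complex.exp_add]
    congr 1
    push_cast
    ring
  -- rewrite trigEval as finite sums
  have hsum : ∀ (g : ℤ → ℂ) (s : Finset ℤ), (∀ n, g n ≠ 0 → n ∈ s) →
      trigEval f₁ g t = ∑ n ∈ s, g n * E n := by
    intro g s hgs
    apply finsum_eq_sum_of_support_subset
    intro n hn
    apply hgs
    intro h
    simp [h] at hn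
  have hLa : trigEval f₁ a t = ∑ n ∈ S, a n * E n := hsum a S haS
  have hLb : trigEval f₁ b t = ∑ d ∈ T, b d * E d := hsum b T (fun d hd => by
    have := hbT d hd
    simp only [hT, Finset.mem_Icc]
    rw [abs_le] at this
    omega)
  rw [hLa, hLb]
  -- expand
  rw [map_sum, Finset.sum_mul_sum]
  simp only [map_mul]
  have hbexp : ∀ d : ℤ, b d * E d = ∑ m ∈ S, a m * (starRingEnd ℂ) (a (m - d)) * E d := by
    intro d; rw [hb]; simp only; rw [Finset.sum_mul]
  calc ∑ m ∈ S, ∑ n ∈ S, a m * E m * ((starRingEnd ℂ) (a n) * (starRingEnd ℂ) (E n))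
      = ∑ m ∈ S, ∑ n ∈ S, a m * (starRingEnd ℂ) (a n) * E (m - n) := by
        apply Finset.sum_congr rfl; intro m _
        apply Finset.sum_congr rfl; intro n _
        rw [← hEmul m n]; ring
    _ = ∑ m ∈ S, ∑ d ∈ T, a m * (starRingEnd ℂ) (a (m - d)) * E d := by
        apply Finset.sum_congr rfl; intro m _
        have h1 : ∑ n ∈ S, a m * (starRingEnd ℂ) (a n) * E (m - n)
            = ∑ᶠ n : ℤ, a m * (starRingEnd ℂ) (a n) * E (m - n) := by
          symm
          apply finsum_eq_sum_of_support_subset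
          intro n hn
          apply haS
          intro h
          simp [h] at hn
        have h2 : ∑ d ∈ T, a m * (starRingEnd ℂ) (a (m - d)) * E d
            = ∑ᶠ d : ℤ, a m * (starRingEnd ℂ) (a (m - d)) * E d := by
          symm
          apply finsum_eq_sum_of_support_subset
          intro d hd
          simp only [Function.mem_support] at hd
          have hm1 : a m ≠ 0 := fun h => hd (by simp [h])
          have hm2 : a (m - d) ≠ 0 := fun h => hd (by simp [h])
          have := hdiff m (m - d) hm1 hm2
          simp only [hT, Finset.coe_Icc, Set.mem_Icc]
          rw [show m - (m - d) = d by ring, abs_le] at this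
          exact this
        rw [h1, h2]
        have := finsum_comp_equiv (Equiv.subLeft m)
          (f := fun n => a m * (starRingEnd ℂ) (a n) * E (m - n))
        rw [← this]
        apply finsum_congr
        intro d
        simp [Equiv.subLeft]
    _ = ∑ d ∈ T, b d * E d := by
        rw [Finset.sum_comm]
        apply Finset.sum_congr rfl
        intro d _
        rw [hbexp]
end
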